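/- On T*ℝ² with canonical Poisson bracket {f,g} = Σ_{i=1,2} (∂f/∂p_i · ∂g/∂x_i − ∂f/∂x_i · ∂g/∂p_i), fix real constants a₁, a₂, a₃ and define H(p,x) = (1/2)p₁² + (1/2)(p₂ + a₁x₁ + a₂x₁²/2 + a₃x₁x₂)² and C(p,x) = a₃p₁ − a₂p₂ + a₁a₃x₂ + (a₃²/2)x₂². Then {C, H} = 0. -/

import Mathlib

open Finset

/-- The canonical Poisson bracket on `T*ℝⁿ ≅ (ℝⁿ) × (ℝⁿ)` (first factor: momenta `p`,
second factor: positions `x`). -/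
noncomputable def pbracket (n : ℕ) (f g : (Fin n → ℝ) × (Fin n → ℝ) → ℝ)
    (z : (Fin n → ℝ) × (Fin n → ℝ)) : ℝ :=
  ∑ i : Fin n,
    (fderiv ℝ f z (Pi.single i 1, 0) * fderiv ℝ g z (0, Pi.single i 1) -
     fderiv ℝ f z (0, Pi.single i 1) * fderiv ℝ g z (Pi.single i 1, 0))

/-- For the reduced normal Hamiltonian of the Cartan group `F_{23}`,
`H = (1/2)p₁² + (1/2)(p₂ + a₁x₁ + a₂x₁²/2 + a₃x₁x₂)²`, the function
`C = a₃p₁ - a₂p₂ + a₁a₃x₂ + (a₃²/2)x₂²` satisfies `{C, H} = 0`. -/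
theorem stmt10 (a₁ a₂ a₃ : ℝ) :
    ∀ z : (Fin 2 → ℝ) × (Fin 2 → ℝ),
      pbracket 2
        (fun w => a₃ * w.1 0 - a₂ * w.1 1 + a₁ * a₃ * w.2 1 + a₃ ^ 2 / 2 * (w.2 1) ^ 2)
        (fun w => 1/2 * (w.1 0) ^ 2 +
          1/2 * (w.1 1 + a₁ * w.2 0 + a₂ * (w.2 0) ^ 2 / 2 + a₃ * w.2 0 * w.2 1) ^ 2)
        z = 0 := by
  intro z
  set P : Fin 2 → ((Fin 2 → ℝ) × (Fin 2 → ℝ)) →L[ℝ] ℝ :=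
    fun i => (ContinuousLinearMap.proj i).comp (ContinuousLinearMap.fst ℝ (Fin 2 → ℝ) (Fin 2 → ℝ)) with hP
  set X : Fin 2 → ((Fin 2 → ℝ) × (Fin 2 → ℝ)) →L[ℝ] ℝ :=
    fun i => (ContinuousLinearMap.proj i).comp (ContinuousLinearMap.snd ℝ (Fin 2 → ℝ) (Fin 2 → ℝ)) with hX
  have hp : ∀ i, HasFDerivAt (fun w : (Fin 2 → ℝ) × (Fin 2 → ℝ) => w.1 i) (P i) z :=
    fun i => (P i).hasFDerivAt
  have hx : ∀ i, HasFDerivAt (fun w : (Fin 2 → ℝ) × (Fin 2 → ℝ) => w.2 i) (X i) z :=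
    fun i => (X i).hasFDerivAt
  have hC := ((((hp 0).const_mul a₃).sub ((hp 1).const_mul a₂)).add
      ((hx 1).const_mul (a₁ * a₃))).add ((((hx 1).mul (hx 1))).const_mul (a₃ ^ 2 / 2))
  have hIn := (((hp 1).add ((hx 0).const_mul a₁)).add
      ((((hx 0).mul (hx 0))).const_mul (a₂ / 2))).add (((hx 0).const_mul a₃).mul (hx 1))
  have hH := ((((hp 0).mul (hp 0))).const_mul (1/2 : ℝ)).add (((hIn.mul hIn)).const_mul (1/2 : ℝ))
  have eC : (fun w : (Fin 2 → ℝ) × (Fin 2 → ℝ) =>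
      a₃ * w.1 0 - a₂ * w.1 1 + a₁ * a₃ * w.2 1 + a₃ ^ 2 / 2 * (w.2 1) ^ 2) =
      (fun w => a₃ * w.1 0 - a₂ * w.1 1 + a₁ * a₃ * w.2 1 + a₃ ^ 2 / 2 * (w.2 1 * w.2 1)) := by
    funext w; ring
  have eH : (fun w : (Fin 2 → ℝ) × (Fin 2 → ℝ) => 1/2 * (w.1 0) ^ 2 +
      1/2 * (w.1 1 + a₁ * w.2 0 + a₂ * (w.2 0) ^ 2 / 2 + a₃ * w.2 0 * w.2 1) ^ 2) =
      (fun w => 1/2 * (w.1 0 * w.1 0) +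
        1/2 * ((w.1 1 + a₁ * w.2 0 + a₂ / 2 * (w.2 0 * w.2 0) + a₃ * w.2 0 * w.2 1) *
          (w.1 1 + a₁ * w.2 0 + a₂ / 2 * (w.2 0 * w.2 0) + a₃ * w.2 0 * w.2 1))) := by
    funext w; ring
  rw [pbracket, Fin.sum_univ_two, eC, eH, HasFDerivAt.fderiv (f := fun w : (Fin 2 → ℝ) × (Fin 2 → ℝ) =>
      a₃ * w.1 0 - a₂ * w.1 1 + a₁ * a₃ * w.2 1 + a₃ ^ 2 / 2 * (w.2 1 * w.2 1)) hC,
    HasFDerivAt.fderiv (f := fun w : (Fin 2 → ℝ) × (Fin 2 → ℝ) => 1/2 * (w.1 0 * w.1 0) +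
        1/2 * ((w.1 1 + a₁ * w.2 0 + a₂ / 2 * (w.2 0 * w.2 0) + a₃ * w.2 0 * w.2 1) *
          (w.1 1 + a₁ * w.2 0 + a₂ / 2 * (w.2 0 * w.2 0) + a₃ * w.2 0 * w.2 1))) hH]
  simp only [ContinuousLinearMap.add_apply, ContinuousLinearMap.sub_apply,
    ContinuousLinearMap.smul_apply, smul_eq_mul, hP, hX,
    ContinuousLinearMap.coe_comp', Function.comp_apply, ContinuousLinearMap.proj_apply,
    ContinuousLinearMap.coe_fst', ContinuousLinearMap.coe_snd', Pi.single_apply]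
  norm_num
  ring
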